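/- arXiv:2504.16149 — 2 statements merged into one kernel-verified Lean document; each statement's English description precedes it below -/
import Mathlib

section
/- A commutative ring k is noetherian if and only if every filtered colimit of injective k-modules is injective. -/
open CategoryTheory CategoryTheory.Limits

lemma Module.Injective.pi'' {k : Type} [CommRing k] {ι : Type} (A : ι → Type)
    [∀ i, AddCommGroup (A i)] [∀ i, Module k (A i)]
    (h : ∀ i, Module.Injective k (A i)) :
    Module.Injective k (∀ i, A i) where
  out X Y _ _ _ _ f hf g := by
    choose L hL using fun i => (h i).out f hf ((LinearMap.proj i).comp g)
    exact ⟨LinearMap.pi L, fun x => funext fun i => hL i x⟩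

section Dir1
variable {k : Type} [CommRing k] [IsNoetherianRing k]
  {J : Type} [SmallCategory J] [IsFiltered J] (F : J ⥤ ModuleCat k)

theorem injective_colimit_of_noetherian
    (hF : ∀ j, Injective (F.obj j)) : Injective (colimit F) := by
  have hbaer : Module.Baer k ↥(colimit F) := by
    intro I g
    classical
    -- present the ideal `I` by finitely many generators
    obtain ⟨n, s, hs⟩ := Submodule.fg_iff_exists_fin_generating_family.mp
      (IsNoetherian.noetherian I)
    have hsI : ∀ i, s i ∈ I := fun i => by
      rw [← hs]; exact Submodule.subset_span ⟨i, rfl⟩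
    set π₀ : (Fin n → k) →ₗ[k] k := Fintype.linearCombination k s with hπ₀
    have hπ₀mem : ∀ v, π₀ v ∈ I := fun v => by
      rw [hπ₀, Fintype.linearCombination_apply]
      exact Submodule.sum_mem _ fun i _ => Submodule.smul_mem _ _ (hsI i)
    set π : (Fin n → k) →ₗ[k] I := π₀.codRestrict I hπ₀mem with hπ
    have hπsurj : Function.Surjective π := by
      rintro ⟨y, hy⟩
      rw [← hs, Submodule.mem_span_range_iff_exists_fun] at hy
      obtain ⟨v, hv⟩ := hy
      exact ⟨v, Subtype.ext (by simpa [hπ, hπ₀, Fintype.linearCombination_apply] using hv)⟩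
    set φ : (Fin n → k) →ₗ[k] ↥(colimit F) := g.comp π with hφ
    -- find representatives for the images of the basis vectors at a single stage
    have hrep : ∀ i : Fin n, ∃ (j : J) (y : F.obj j),
        colimit.ι F j y = φ (Pi.single i 1) := fun i =>
      Concrete.colimit_exists_rep F (φ (Pi.single i 1))
    choose j1 y1 hy1 using hrep
    set O₁ : Finset J := Finset.image j1 Finset.univ with hO₁
    set j₀ : J := IsFiltered.sup O₁ ∅ with hj₀
    have hmem : ∀ i, j1 i ∈ O₁ := fun i => Finset.mem_image_of_mem _ (Finset.mem_univ i)
    set y : ∀ _ : Fin n, F.obj j₀ :=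
      fun i => F.map (IsFiltered.toSup O₁ ∅ (hmem i)) (y1 i) with hy
    have hyrep : ∀ i, colimit.ι F j₀ (y i) = φ (Pi.single i 1) := by
      intro i
      rw [← hy1 i, hy]
      exact ConcreteCategory.congr_hom (colimit.w F (IsFiltered.toSup O₁ ∅ (hmem i))) (y1 i)
    set ψ : (Fin n → k) →ₗ[k] F.obj j₀ := Fintype.linearCombination k y with hψ
    have hψrep : ∀ v, colimit.ι F j₀ (ψ v) = φ v := by
      intro v
      have : (colimit.ι F j₀).hom.comp ψ = φ := by
        apply Module.Basis.ext (Pi.basisFun k (Fin n))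
        intro i
        simp only [LinearMap.comp_apply, Pi.basisFun_apply, hψ]
        rw [Fintype.linearCombination_apply_single]
        simpa using hyrep i
      exact LinearMap.congr_fun this v
    -- the kernel of the presentation is finitely generated; kill it at a later stage
    obtain ⟨m, r, hr⟩ := Submodule.fg_iff_exists_fin_generating_family.mp
      (IsNoetherian.noetherian (LinearMap.ker π))
    have hrker : ∀ l, r l ∈ LinearMap.ker π := fun l => by
      rw [← hr]; exact Submodule.subset_span ⟨l, rfl⟩
    have hzero : ∀ l : Fin m, colimit.ι F j₀ (ψ (r l)) = 0 := fun l => by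
      rw [hψrep, hφ, LinearMap.comp_apply, LinearMap.mem_ker.mp (hrker l), map_zero]
    have hkilled : ∀ l : Fin m, ∃ (j' : J) (u : j₀ ⟶ j'), F.map u (ψ (r l)) = 0 := fun l =>
      Concrete.colimit_rep_eq_zero k F j₀ (ψ (r l)) (hzero l)
    choose j2 u2 hu2 using hkilled
    set O : Finset J := insert j₀ (Finset.image j2 Finset.univ) with hO
    have hmem0 : j₀ ∈ O := Finset.mem_insert_self _ _
    have hmem2 : ∀ l, j2 l ∈ O := fun l =>
      Finset.mem_insert_of_mem (Finset.mem_image_of_mem _ (Finset.mem_univ l))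
    set H : Finset (Σ' (X Y : J) (_ : X ∈ O) (_ : Y ∈ O), X ⟶ Y) :=
      Finset.image (fun l => ⟨j₀, j2 l, hmem0, hmem2 l, u2 l⟩) Finset.univ with hH
    obtain ⟨S, T, hT⟩ := IsFiltered.sup_exists O H
    set w : j₀ ⟶ S := T hmem0 with hw
    have hkill : ∀ l, F.map w (ψ (r l)) = 0 := by
      intro l
      have h1 : u2 l ≫ T (hmem2 l) = w := hT hmem0 (hmem2 l)
        (Finset.mem_image_of_mem _ (Finset.mem_univ l))
      rw [← h1, F.map_comp]
      change F.map (T (hmem2 l)) (F.map (u2 l) (ψ (r l))) = 0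
      rw [hu2 l, map_zero]
    set ψ₁ : (Fin n → k) →ₗ[k] F.obj S := (F.map w).hom.comp ψ with hψ₁
    have hψ₁rep : ∀ v, colimit.ι F S (ψ₁ v) = φ v := by
      intro v
      rw [← hψrep v, hψ₁]
      exact ConcreteCategory.congr_hom (colimit.w F w) (ψ v)
    have hker : LinearMap.ker π ≤ LinearMap.ker ψ₁ := by
      rw [← hr, Submodule.span_le]
      rintro _ ⟨l, rfl⟩
      exact LinearMap.mem_ker.mpr (by rw [hψ₁, LinearMap.comp_apply, hkill l])
    -- descend `ψ₁` to a map on `I`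
    set e := π.quotKerEquivOfSurjective hπsurj with he
    have he' : ∀ v, e (Submodule.Quotient.mk v) = π v := fun v => rfl
    set h : ↥I →ₗ[k] F.obj S :=
      ((LinearMap.ker π).liftQ ψ₁ hker).comp (e.symm : ↥I →ₗ[k] _) with hh
    have hhπ : ∀ v, h (π v) = ψ₁ v := by
      intro v
      have hsymm : e.symm (π v) = Submodule.Quotient.mk v := by
        rw [← he' v, LinearEquiv.symm_apply_apply]
      rw [hh, LinearMap.comp_apply, LinearEquiv.coe_coe, hsymm, Submodule.liftQ_apply]
    -- extend along `I ↪ k` using injectivity of `F.obj S`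
    have hinj : Module.Injective k ↥(F.obj S) :=
      Module.injective_module_of_injective_object k ↥(F.obj S) (inj := hF S)
    obtain ⟨Hh, hHh⟩ := hinj.out I.subtype (Submodule.injective_subtype I) h
    refine ⟨(colimit.ι F S).hom.comp Hh, ?_⟩
    intro x mem
    obtain ⟨v, hv⟩ := hπsurj ⟨x, mem⟩
    have hHx : Hh x = h ⟨x, mem⟩ := hHh ⟨x, mem⟩
    rw [LinearMap.comp_apply, hHx, ← hv, hhπ v, hψ₁rep v, hφ, LinearMap.comp_apply, hv]
  have : Module.Injective k ↥(colimit F) := hbaer.injective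
  exact Module.injective_object_of_injective_module k ↥(colimit F)

end Dir1

namespace BassPapp
variable {k : Type} [CommRing k] (c : ℕ →o Ideal k)

/-- An injective module containing `k ⧸ c i`. -/
noncomputable def E (i : ℕ) : ModuleCat k :=
  Injective.under (ModuleCat.of k (k ⧸ c i))

instance (i : ℕ) : Injective (E c i) := Injective.injective_under _

/-- The embedding of `k ⧸ c i` into `E c i`. -/
noncomputable def toE (i : ℕ) : (k ⧸ c i) →ₗ[k] ↥(E c i) :=
  (Injective.ι (ModuleCat.of k (k ⧸ c i))).hom

lemma toE_injective (i : ℕ) : Function.Injective (toE c i) :=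
  (ModuleCat.mono_iff_injective (Injective.ι (ModuleCat.of k (k ⧸ c i)))).mp inferInstance

/-- transition maps for the "finite direct sum" diagram. -/
noncomputable def trans {S T : Finset ℕ} (h : S ⊆ T) :
    (∀ i : S, ↥(E c i)) →ₗ[k] (∀ i : T, ↥(E c i)) :=
  LinearMap.pi fun i => if hi : (i : ℕ) ∈ S then LinearMap.proj (⟨i, hi⟩ : S) else 0

lemma trans_apply {S T : Finset ℕ} (h : S ⊆ T) (x : ∀ i : S, ↥(E c i)) (i : T) :
    trans c h x i = if hi : (i : ℕ) ∈ S then x ⟨i, hi⟩ else 0 := by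
  by_cases hi : (i : ℕ) ∈ S
  · rw [trans, LinearMap.pi_apply, dif_pos hi, LinearMap.proj_apply]
    rw [dif_pos hi]
  · rw [trans, LinearMap.pi_apply, dif_neg hi, dif_neg hi, LinearMap.zero_apply]

/-- The diagram of finite direct sums of the `E c i`. -/
noncomputable def D : Finset ℕ ⥤ ModuleCat k where
  obj S := ModuleCat.of k (∀ i : S, ↥(E c i))
  map {S T} f := ModuleCat.ofHom (trans c (leOfHom f))
  map_id S := by
    refine ModuleCat.hom_ext (LinearMap.ext fun x => funext fun i => ?_)
    change trans c (leOfHom (𝟙 S)) x i = x i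
    rw [trans_apply, dif_pos i.2]
  map_comp {S T U} f g := by
    refine ModuleCat.hom_ext (LinearMap.ext fun x => funext fun i => ?_)
    change trans c (leOfHom (f ≫ g)) x i = trans c (leOfHom g) (trans c (leOfHom f) x) i
    rw [trans_apply, trans_apply]
    by_cases hT : (i : ℕ) ∈ T
    · rw [dif_pos hT, trans_apply]
    · have hS : (i : ℕ) ∉ S := fun hx => hT (leOfHom f hx)
      rw [dif_neg hT, dif_neg hS]

lemma Dmap_apply {S T : Finset ℕ} (f : S ⟶ T) (x : ∀ i : S, ↥(E c i)) (i : T) :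
    (D c).map f x i = if hi : (i : ℕ) ∈ S then x ⟨i, hi⟩ else 0 :=
  trans_apply c (leOfHom f) x i

instance (S : Finset ℕ) : Injective ((D c).obj S) := by
  have h : ∀ i : S, Module.Injective k ↥(E c (i : ℕ)) := fun i =>
    Module.injective_module_of_injective_object k _
      (inj := inferInstanceAs (Injective (E c (i : ℕ))))
  have : Module.Injective k (∀ i : S, ↥(E c (i : ℕ))) := Module.Injective.pi'' _ h
  exact Module.injective_object_of_injective_module k _


noncomputable def q (n : ℕ) : ↥(c n) →ₗ[k] ∀ i : Finset.range (n+1), ↥(E c i) :=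
  LinearMap.pi fun i => (toE c i).comp (((c (i : ℕ)).mkQ).comp (Submodule.subtype (c n)))

lemma q_apply (n : ℕ) (x : ↥(c n)) (i : Finset.range (n+1)) :
    q c n x i = toE c (i : ℕ) (Submodule.Quotient.mk (x : k)) := rfl

noncomputable def fStage (n : ℕ) : ↥(c n) →ₗ[k] ↥(colimit (D c)) :=
  (colimit.ι (D c) (Finset.range (n+1))).hom.comp (q c n)

lemma fStage_compat {n m : ℕ} (h : n ≤ m) (x : k) (hn : x ∈ c n) :
    fStage c n ⟨x, hn⟩ = fStage c m ⟨x, c.mono h hn⟩ := by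
  have hsub : Finset.range (n+1) ⊆ Finset.range (m+1) := by
    intro a ha; rw [Finset.mem_range] at ha ⊢; omega
  have hq : (D c).map (homOfLE hsub) (q c n ⟨x, hn⟩) = q c m ⟨x, c.mono h hn⟩ := by
    funext i
    rw [Dmap_apply, q_apply]
    by_cases hi : (i : ℕ) ∈ Finset.range (n+1)
    · rw [dif_pos hi]; rfl
    · rw [dif_neg hi]
      have hni : n ≤ (i : ℕ) := by
        rw [Finset.mem_range] at hi; omega
      have hxi : x ∈ c (i : ℕ) := c.mono hni hn
      have : (Submodule.Quotient.mk x : k ⧸ c (i : ℕ)) = 0 :=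
        (Submodule.Quotient.mk_eq_zero _).mpr hxi
      rw [this, map_zero]
  calc fStage c n ⟨x, hn⟩
      = colimit.ι (D c) (Finset.range (m+1))
          ((D c).map (homOfLE hsub) (q c n ⟨x, hn⟩)) :=
        (ConcreteCategory.congr_hom (colimit.w (D c) (homOfLE hsub)) (q c n ⟨x, hn⟩)).symm
    _ = _ := by rw [hq]; rfl

lemma fStage_indep (x : k) (n m : ℕ) (hn : x ∈ c n) (hm : x ∈ c m) :
    fStage c n ⟨x, hn⟩ = fStage c m ⟨x, hm⟩ := by
  rcases le_total n m with h | h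
  · rw [fStage_compat c h x hn]
  · rw [fStage_compat c h x hm]

end BassPapp

open BassPapp in
/-- A commutative ring `k` is noetherian iff every filtered colimit of
injective `k`-modules is injective. -/
theorem noetherian_iff_filtered_colimit_injective (k : Type) [CommRing k] :
    IsNoetherianRing k ↔
      ∀ (J : Type) (_ : SmallCategory J) (_ : IsFiltered J)
        (F : J ⥤ ModuleCat k),
        (∀ j : J, Injective (F.obj j)) → Injective (colimit F) := by
  constructor
  · intro hN J _ _ F hF
    exact injective_colimit_of_noetherian F hF
  · intro H
    refine monotone_stabilizes_iff_noetherian.mp ?_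
    intro c
    classical
    set Iω : Ideal k := ⨆ n, c n with hIω
    have hdir : ∀ x : ↥Iω, ∃ n, (x : k) ∈ c n := fun x =>
      (Submodule.mem_iSup_of_directed _ c.monotone.directed_le).mp x.2
    choose nx hnx using hdir
    set f : ↥Iω →ₗ[k] ↥(colimit (D c)) :=
      { toFun := fun x => fStage c (nx x) ⟨x, hnx x⟩
        map_add' := by
          intro x y
          show fStage c (nx (x + y)) ⟨((x + y : ↥Iω) : k), hnx (x + y)⟩ =
            fStage c (nx x) ⟨(x : k), hnx x⟩ + fStage c (nx y) ⟨(y : k), hnx y⟩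
          have hx' : (x : k) ∈ c (max (nx x) (nx y)) := c.mono (le_max_left _ _) (hnx x)
          have hy' : (y : k) ∈ c (max (nx x) (nx y)) := c.mono (le_max_right _ _) (hnx y)
          have hxy' : ((x + y : ↥Iω) : k) ∈ c (max (nx x) (nx y)) := by
            rw [Submodule.coe_add]; exact add_mem hx' hy'
          rw [fStage_indep c _ (nx (x + y)) (max (nx x) (nx y)) (hnx _) hxy',
            fStage_indep c _ (nx x) (max (nx x) (nx y)) (hnx x) hx',
            fStage_indep c _ (nx y) (max (nx x) (nx y)) (hnx y) hy']
          have : (⟨((x + y : ↥Iω) : k), hxy'⟩ : ↥(c (max (nx x) (nx y)))) =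
              ⟨(x : k), hx'⟩ + ⟨(y : k), hy'⟩ := rfl
          rw [this, map_add]
        map_smul' := by
          intro a x
          show fStage c (nx (a • x)) ⟨((a • x : ↥Iω) : k), hnx (a • x)⟩ =
            (RingHom.id k) a • fStage c (nx x) ⟨(x : k), hnx x⟩
          have ha : ((a • x : ↥Iω) : k) ∈ c (nx x) := by
            rw [Submodule.coe_smul]; exact Submodule.smul_mem _ a (hnx x)
          rw [fStage_indep c _ (nx (a • x)) (nx x) (hnx _) ha]
          have : (⟨((a • x : ↥Iω) : k), ha⟩ : ↥(c (nx x))) = a • ⟨(x : k), hnx x⟩ := rfl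
          rw [this, map_smul]
          rfl } with hf
    haveI hinjcolim : Injective (colimit (D c)) :=
      H (Finset ℕ) inferInstance inferInstance (D c) (fun S => inferInstance)
    have hmi : Module.Injective k ↥(colimit (D c)) :=
      Module.injective_module_of_injective_object k _ (inj := hinjcolim)
    obtain ⟨g, hg⟩ := hmi.out Iω.subtype (Submodule.injective_subtype Iω) f
    obtain ⟨T0, e, he⟩ := Concrete.colimit_exists_rep (D c) (g 1)
    set N := T0.sup id + 1 with hN
    refine ⟨N, fun m hm => le_antisymm (c.mono hm) ?_⟩
    intro x hxm
    have hxΩ : x ∈ Iω := (le_iSup c m) hxm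
    set X : ↥Iω := ⟨x, hxΩ⟩ with hX
    set M := max m N with hM
    have hxM : x ∈ c M := c.mono (le_max_left _ _) hxm
    have h1 : f X = colimit.ι (D c) T0 (x • e) := by
      have e2 : g x = x • g 1 := by rw [← map_smul, smul_eq_mul, mul_one]
      have e3 : colimit.ι (D c) T0 (x • e) = x • colimit.ι (D c) T0 e :=
        map_smul _ x e
      have he' : colimit.ι (D c) T0 e = g 1 := he
      rw [e3, he', ← e2]
      exact (hg X).symm
    have h2 : f X = fStage c M ⟨x, hxM⟩ := fStage_indep c x _ M (hnx X) hxM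
    have heq : colimit.ι (D c) (Finset.range (M + 1)) (q c M ⟨x, hxM⟩) =
        colimit.ι (D c) T0 (x • e) := by
      rw [← h1, h2]; rfl
    obtain ⟨T, u, v, huv⟩ := Concrete.colimit_exists_of_rep_eq (D c) _ _ heq
    have hNM : N ∈ Finset.range (M + 1) := Finset.mem_range.mpr (by omega)
    have hNT : N ∈ T := leOfHom u hNM
    have hLHS : (D c).map u (q c M ⟨x, hxM⟩) ⟨N, hNT⟩ =
        toE c N (Submodule.Quotient.mk x) := by
      rw [Dmap_apply, dif_pos hNM]
      rfl
    have hN0 : N ∉ T0 := by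
      intro hmem
      have h := Finset.le_sup (f := id) hmem
      simp only [id] at h
      omega
    have hRHS : (D c).map v (x • e) ⟨N, hNT⟩ = 0 := by
      exact (Dmap_apply c v (x • e) ⟨N, hNT⟩).trans (dif_neg hN0)
    have happ : (D c).map u (q c M ⟨x, hxM⟩) ⟨N, hNT⟩ =
        (D c).map v (x • e) ⟨N, hNT⟩ := congrFun huv _
    have hzero : toE c N (Submodule.Quotient.mk x) = 0 :=
      hLHS.symm.trans (happ.trans hRHS)
    have hmk : (Submodule.Quotient.mk x : k ⧸ c N) = 0 :=
      toE_injective c N (by rw [hzero, map_zero])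
    exact (Submodule.Quotient.mk_eq_zero _).mp hmk
end

section
/- A commutative ring k is noetherian if and only if the direct sum of any family of injective k-modules is injective. -/
open CategoryTheory

universe v

section Aux
open DirectSum

private lemma bassPapp_fwd (k : Type) [CommRing k] [IsNoetherianRing k]
    (ι : Type) (M : ι → ModuleCat.{v} k) (hM : ∀ i, Injective (M i)) :
    Injective (ModuleCat.of k (DirectSum ι (fun i => M i))) := by
  classical
  have baerM : ∀ i, Module.Baer k (M i) := fun i =>
    Module.Baer.of_injective (Module.injective_module_of_injective_object k (M i)
      (inj := hM i))
  refine Module.injective_object_of_injective_module (inj := ?_)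
  refine Module.Baer.injective ?_
  intro I f
  obtain ⟨s, hs⟩ : I.FG := IsNoetherian.noetherian I
  set S : Finset ι := s.biUnion (fun x => if h : x ∈ I then (f ⟨x, h⟩).support else ∅) with hS
  have hsupp : ∀ (y : I), ∀ n, n ∉ S → (f y) n = 0 := by
    rintro ⟨x, hx⟩ n hn
    have hx' : x ∈ Ideal.span (s : Set k) := hs.symm ▸ hx
    obtain ⟨c, -, hc⟩ := Submodule.mem_span_finset.1 hx'
    have hy : (⟨x, hx⟩ : I)
        = ∑ z ∈ s.attach, c z • (⟨z.1, hs ▸ Submodule.subset_span z.2⟩ : I) := by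
      apply Subtype.ext
      rw [Submodule.coe_sum]
      simp only [SetLike.val_smul, smul_eq_mul]
      rw [Finset.sum_attach s (fun z => c z * z)]
      simpa [smul_eq_mul] using hc.symm
    rw [hy, map_sum, DFinsupp.finset_sum_apply]
    refine Finset.sum_eq_zero fun z _ => ?_
    rw [map_smul]
    have hz : (f ⟨z.1, hs ▸ Submodule.subset_span z.2⟩) n = 0 := by
      by_contra hne
      exact hn (Finset.mem_biUnion.2 ⟨z.1, z.2, by
        rw [dif_pos (hs ▸ Submodule.subset_span z.2 : (z : k) ∈ I)]
        exact DFinsupp.mem_support_iff.2 hne⟩)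
    rw [DFinsupp.smul_apply, hz, smul_zero]
  -- extend each component
  choose g hg using fun i => baerM i I ((DirectSum.component k ι (fun i => M i) i).comp f)
  refine ⟨∑ i ∈ S, (DirectSum.lof k ι (fun i => M i) i).comp (g i), fun x hx => ?_⟩
  rw [LinearMap.sum_apply]
  have : ∀ i ∈ S, ((DirectSum.lof k ι (fun i => M i) i).comp (g i)) x
      = DirectSum.of (fun i => M i) i ((f ⟨x, hx⟩) i) := by
    intro i _
    rw [LinearMap.comp_apply, hg i x hx]
    rfl
  rw [Finset.sum_congr rfl this]
  calc ∑ i ∈ S, DirectSum.of (fun i => M i) i ((f ⟨x, hx⟩) i)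
      = ∑ i ∈ (f ⟨x, hx⟩).support, DirectSum.of (fun i => M i) i ((f ⟨x, hx⟩) i) := by
        refine (Finset.sum_subset ?_ ?_).symm
        · intro n hn
          by_contra hns
          exact DFinsupp.mem_support_iff.1 hn (hsupp _ n hns)
        · intro n _ hn
          have : (f ⟨x, hx⟩) n = 0 := by
            by_contra hne
            exact hn (DFinsupp.mem_support_iff.2 hne)
          simp [this]
    _ = f ⟨x, hx⟩ := DirectSum.sum_support_of _



set_option maxHeartbeats 1000000 in
private lemma bassPapp_bwd (k : Type) [CommRing k]
    (H : ∀ (ι : Type) (M : ι → ModuleCat.{v} k),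
        (∀ i, Injective (M i)) →
          Injective (ModuleCat.of k (DirectSum ι (fun i => M i)))) :
    IsNoetherianRing k := by
  classical
  rw [isNoetherianRing_iff, ← monotone_stabilizes_iff_noetherian]
  intro F
  set E : ℕ → ModuleCat.{v} k :=
    fun n => Injective.under (ModuleCat.of k (ULift.{v} (k ⧸ F n))) with hE
  have hEinj : ∀ n, Injective (E n) := fun n => Injective.injective_under _
  set ι' : ∀ n, ULift.{v} (k ⧸ F n) →ₗ[k] E n :=
    fun n => ((Injective.ι (ModuleCat.of k (ULift.{v} (k ⧸ F n)))).hom :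
      ULift.{v} (k ⧸ F n) →ₗ[k] E n) with hι'
  have hι'inj : ∀ n, Function.Injective (ι' n) :=
    fun n => (ModuleCat.mono_iff_injective
      (Injective.ι (ModuleCat.of k (ULift.{v} (k ⧸ F n))))).mp inferInstance
  set ψ : ∀ n, k →ₗ[k] E n :=
    fun n => (ι' n).comp ((ULift.moduleEquiv.symm.toLinearMap).comp (F n).mkQ) with hψ
  have hψ_iff : ∀ n (x : k), ψ n x = 0 ↔ x ∈ F n := by
    intro n x
    constructor
    · intro h
      have h1 : (ULift.moduleEquiv.symm.toLinearMap : (k ⧸ F n) →ₗ[k] ULift.{v} (k ⧸ F n)) ((F n).mkQ x) = 0 := by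
        apply hι'inj n
        rw [map_zero]; exact h
      have h2 : (F n).mkQ x = 0 := by
        have := congrArg (ULift.moduleEquiv : ULift.{v} (k ⧸ F n) ≃ₗ[k] (k ⧸ F n)) h1
        simpa using this
      rwa [Submodule.mkQ_apply, Submodule.Quotient.mk_eq_zero] at h2
    · intro hx
      have h2 : (F n).mkQ x = 0 := by
        rwa [Submodule.mkQ_apply, Submodule.Quotient.mk_eq_zero]
      simp only [hψ, LinearMap.comp_apply, h2, map_zero]
  set I : Ideal k := ⨆ n, F n with hI
  have hmem : ∀ x ∈ I, ∃ n, x ∈ F n := fun x hx =>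
    (Submodule.mem_iSup_of_directed F (F.monotone.directed_le)).1 hx
  set Φ : ↥I →ₗ[k] DirectSum ℕ (fun n => E n) :=
    { toFun := fun y =>
        ⟨fun n => ψ n y, Trunc.mk ⟨Multiset.range ((hmem y.1 y.2).choose + 1), by
          intro n
          rcases lt_or_ge n ((hmem y.1 y.2).choose + 1) with h | h
          · exact Or.inl (Multiset.mem_range.2 h)
          · exact Or.inr ((hψ_iff n _).2
              (F.monotone (by omega) (hmem y.1 y.2).choose_spec))⟩⟩
      map_add' := by
        intro y z
        refine DFinsupp.ext fun n => ?_
        rw [DFinsupp.add_apply]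
        exact map_add (ψ n) y.1 z.1
      map_smul' := by
        intro c y
        refine DFinsupp.ext fun n => ?_
        rw [DFinsupp.smul_apply]
        exact map_smul (ψ n) c y.1 } with hΦ
  have hΦapp : ∀ (y : ↥I) (n : ℕ), (Φ y) n = ψ n y := fun _ _ => rfl
  have hD : Module.Injective k (DirectSum ℕ (fun n => E n)) :=
    Module.injective_module_of_injective_object k _ (inj := H ℕ E hEinj)
  -- extend via ULift
  set uI : ULift.{v} ↥I ≃ₗ[k] ↥I := ULift.moduleEquiv with huI
  set uk : ULift.{v} k ≃ₗ[k] k := ULift.moduleEquiv with huk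
  set f' : ULift.{v} ↥I →ₗ[k] ULift.{v} k :=
    (uk.symm.toLinearMap).comp (I.subtype.comp uI.toLinearMap) with hf'
  have hf'inj : Function.Injective f' :=
    uk.symm.injective.comp (I.injective_subtype.comp uI.injective)
  obtain ⟨G, hG⟩ := hD.out f' hf'inj (Φ.comp uI.toLinearMap)
  set G' : k →ₗ[k] DirectSum ℕ (fun n => E n) := G.comp uk.symm.toLinearMap with hG'
  have hG'ext : ∀ (x : k) (hx : x ∈ I), G' x = Φ ⟨x, hx⟩ := by
    intro x hx
    have := hG (ULift.up ⟨x, hx⟩)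
    simpa [hG', hf', huI, huk] using this
  set d := G' 1 with hd
  set N := d.support.sup id + 1 with hN
  have hdN : d N = 0 := by
    by_contra h
    have h1 : N ∈ d.support := DFinsupp.mem_support_iff.2 h
    have h2 := Finset.le_sup (f := id) h1
    simp only [id] at h2
    omega
  have hIN : I ≤ F N := by
    intro x hx
    have h2 : G' x = x • d := by
      rw [hd, ← map_smul, smul_eq_mul, mul_one]
    have h3 : (Φ ⟨x, hx⟩) N = 0 := by
      rw [← hG'ext x hx, h2, DFinsupp.smul_apply, hdN, smul_zero]
    rw [hΦapp] at h3
    exact (hψ_iff N x).1 h3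
  exact ⟨N, fun m hm => le_antisymm (F.monotone hm) ((le_iSup F m).trans hIN)⟩

end Aux

/-- A commutative ring `k` is noetherian iff the direct sum of any family of
injective `k`-modules is injective. -/
theorem noetherian_iff_directSum_injective (k : Type) [CommRing k] :
    IsNoetherianRing k ↔
      ∀ (ι : Type) (M : ι → ModuleCat k),
        (∀ i, Injective (M i)) →
          Injective (ModuleCat.of k (DirectSum ι (fun i => M i))) := by
  constructor
  · intro h ι M hM
    exact bassPapp_fwd k ι M hM
  · intro H
    exact bassPapp_bwd k H
end
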